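/- arXiv:1904.02580 — 3 statements merged into one kernel-verified Lean document; each statement's English description precedes it below -/
import Mathlib

section
/- Let ℓ(x, D) = inf_{α ∈ ℝ^k} (1/2)‖x − Dα‖² + λ‖α‖₁. Then for every fixed x ∈ ℝ^m, the map D ↦ ℓ(x, D) is Lipschitz continuous on any bounded subset 𝒟 of ℝ^{m×k} when x ranges over a bounded set 𝒳 ⊂ ℝ^m, with a Lipschitz constant depending only on the bounds of 𝒳 and 𝒟 and on λ. -/
set_option maxHeartbeats 1000000

open Matrix

/-- ℓ¹ norm of a finite vector. -/
def l1 {k : ℕ} (v : Fin k → ℝ) : ℝ := ∑ j, |v j|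

/-- Euclidean norm of a finite vector. -/
noncomputable def e2 {m : ℕ} (v : Fin m → ℝ) : ℝ := Real.sqrt (∑ i, v i ^ 2)

/-- View a Euclidean vector indexed by `Fin m × Fin k` as an `m × k` matrix. -/
def toMat {m k : ℕ} (D : EuclideanSpace ℝ (Fin m × Fin k)) : Matrix (Fin m) (Fin k) ℝ :=
  Matrix.of fun i j => D (i, j)

/-- Per-sample approximation error `ℓ(x, D) = inf_α ½‖x − Dα‖² + λ‖α‖₁`. -/
noncomputable def ellLoss {m k : ℕ} (lam : ℝ) (x : Fin m → ℝ)
    (D : Matrix (Fin m) (Fin k) ℝ) : ℝ :=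
  ⨅ α : Fin k → ℝ, ((1 : ℝ) / 2) * e2 (x - D.mulVec α) ^ 2 + lam * l1 α

noncomputable def toE {m : ℕ} (v : Fin m → ℝ) : EuclideanSpace ℝ (Fin m) :=
  (EuclideanSpace.equiv (Fin m) ℝ).symm v

lemma toE_apply {m : ℕ} (v : Fin m → ℝ) (i : Fin m) : toE v i = v i := rfl

lemma e2_eq {m : ℕ} (v : Fin m → ℝ) : e2 v = ‖toE v‖ := by
  rw [EuclideanSpace.norm_eq]
  simp [e2, toE_apply, sq_abs]

lemma e2_nonneg {m : ℕ} (v : Fin m → ℝ) : 0 ≤ e2 v := Real.sqrt_nonneg _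

lemma l1_nonneg {k : ℕ} (v : Fin k → ℝ) : 0 ≤ l1 v :=
  Finset.sum_nonneg fun _ _ => abs_nonneg _

lemma l1_zero {k : ℕ} : l1 (0 : Fin k → ℝ) = 0 := by simp [l1]

lemma toE_sub {m : ℕ} (u v : Fin m → ℝ) : toE (u - v) = toE u - toE v := by
  simp [toE, map_sub]

lemma e2_sub_le {m : ℕ} (u v w : Fin m → ℝ) : e2 (u - v) ≤ e2 (u - w) + e2 (w - v) := by
  rw [e2_eq, e2_eq, e2_eq, toE_sub, toE_sub, toE_sub]
  exact norm_sub_le_norm_sub_add_norm_sub _ _ _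

/-- norm of a column of `D` is bounded by the full norm. -/
lemma col_norm_le {m k : ℕ} (D : EuclideanSpace ℝ (Fin m × Fin k)) (j : Fin k) :
    e2 (fun i => toMat D i j) ≤ ‖D‖ := by
  rw [EuclideanSpace.norm_eq]
  unfold e2
  apply Real.sqrt_le_sqrt
  have : (∑ p : Fin m × Fin k, ‖D p‖ ^ 2) = ∑ i : Fin m, ∑ j' : Fin k, ‖D (i, j')‖ ^ 2 := by
    rw [Fintype.sum_prod_type]
  rw [this]
  apply Finset.sum_le_sum
  intro i _
  have h1 : toMat D i j ^ 2 = ‖D (i, j)‖ ^ 2 := by simp [toMat, sq_abs]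
  rw [h1]
  exact Finset.single_le_sum (f := fun j' => ‖D (i, j')‖ ^ 2) (fun j' _ => by positivity) (Finset.mem_univ j)

lemma mulVec_e2_le {m k : ℕ} (D : EuclideanSpace ℝ (Fin m × Fin k)) (α : Fin k → ℝ) :
    e2 ((toMat D).mulVec α) ≤ ‖D‖ * l1 α := by
  have hdecomp : toE ((toMat D).mulVec α) = ∑ j : Fin k, α j • toE (fun i => toMat D i j) := by
    apply PiLp.ext
    intro i
    simp only [toE_apply]
    rw [WithLp.ofLp_sum, Finset.sum_apply]
    simp only [PiLp.smul_apply, toE_apply, smul_eq_mul]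
    simp [Matrix.mulVec, dotProduct, mul_comm]
  rw [e2_eq, hdecomp]
  calc ‖∑ j : Fin k, α j • toE (fun i => toMat D i j)‖
      ≤ ∑ j : Fin k, ‖α j • toE (fun i => toMat D i j)‖ := norm_sum_le _ _
    _ ≤ ∑ j : Fin k, |α j| * ‖D‖ := by
        apply Finset.sum_le_sum
        intro j _
        rw [norm_smul, Real.norm_eq_abs]
        exact mul_le_mul_of_nonneg_left (by rw [← e2_eq]; exact col_norm_le D j) (abs_nonneg _)
    _ = ‖D‖ * l1 α := by rw [l1, ← Finset.sum_mul, mul_comm]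

lemma ell_bdd {m k : ℕ} (lam : ℝ) (hlam : 0 ≤ lam) (x : Fin m → ℝ)
    (D : Matrix (Fin m) (Fin k) ℝ) :
    BddBelow (Set.range fun α : Fin k → ℝ =>
      ((1 : ℝ) / 2) * e2 (x - D.mulVec α) ^ 2 + lam * l1 α) := by
  refine ⟨0, ?_⟩
  rintro _ ⟨α, rfl⟩
  have := e2_nonneg (x - D.mulVec α)
  have := l1_nonneg α
  positivity

/-- For bounded samples and dictionaries, `D ↦ ℓ(x, D)` is Lipschitz on the bounded
dictionary set, uniformly in `x`, with a constant depending only on the bounds and `λ`. -/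
theorem stmt5 {m k : ℕ} (lam : ℝ) (hlam : 0 < lam) (Rx RD : ℝ) (hRx : 0 ≤ Rx) (hRD : 0 ≤ RD) :
    ∃ L : NNReal, ∀ x : Fin m → ℝ, e2 x ≤ Rx →
      LipschitzOnWith L (fun D : EuclideanSpace ℝ (Fin m × Fin k) => ellLoss lam x (toMat D))
        {D : EuclideanSpace ℝ (Fin m × Fin k) | ‖D‖ ≤ RD} := by
  set A : ℝ := (Rx ^ 2 / 2 + 1) / lam with hA
  have hA0 : 0 ≤ A := by positivity
  set M : ℝ := Rx + RD * A with hM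
  have hM0 : 0 ≤ M := by positivity
  set C : ℝ := M * A with hC
  have hC0 : 0 ≤ C := by positivity
  refine ⟨Real.toNNReal C, ?_⟩
  intro x hx
  -- key one-sided estimate
  have key : ∀ D ∈ {D : EuclideanSpace ℝ (Fin m × Fin k) | ‖D‖ ≤ RD},
      ∀ D' ∈ {D : EuclideanSpace ℝ (Fin m × Fin k) | ‖D‖ ≤ RD},
      ellLoss lam x (toMat D) ≤ ellLoss lam x (toMat D') + C * dist D D' := by
    intro D hD D' hD'
    simp only [Set.mem_setOf_eq] at hD hD'
    apply le_of_forall_pos_le_add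
    intro ε hε
    set ε₀ : ℝ := min ε 1 with hε₀def
    have hε₀ : 0 < ε₀ := lt_min hε one_pos
    have hε₀1 : ε₀ ≤ 1 := min_le_right _ _
    have hε₀ε : ε₀ ≤ ε := min_le_left _ _
    -- the infimum for D' is < ℓ' + ε₀, pick a witness α
    have hlt : ellLoss lam x (toMat D') < ellLoss lam x (toMat D') + ε₀ := by linarith
    obtain ⟨α, hα⟩ := exists_lt_of_ciInf_lt (f := fun α : Fin k → ℝ =>
      ((1 : ℝ) / 2) * e2 (x - (toMat D').mulVec α) ^ 2 + lam * l1 α) hlt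
    -- bound ℓ' by the value at α = 0
    have hub : ellLoss lam x (toMat D') ≤ Rx ^ 2 / 2 := by
      have h0 := ciInf_le (ell_bdd lam hlam.le x (toMat D')) (0 : Fin k → ℝ)
      rw [ellLoss]
      refine h0.trans ?_
      simp only [Matrix.mulVec_zero, sub_zero, l1_zero, mul_zero, add_zero]
      have := e2_nonneg x
      nlinarith
    -- hence l1 α ≤ A
    have hl1 : l1 α ≤ A := by
      have h1 : lam * l1 α ≤ Rx ^ 2 / 2 + 1 := by
        have h2 : 0 ≤ ((1 : ℝ) / 2) * e2 (x - (toMat D').mulVec α) ^ 2 := by positivity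
        linarith
      rw [hA, le_div_iff₀ hlam, mul_comm]
      exact h1
    -- notation
    set a : ℝ := e2 (x - (toMat D).mulVec α) with ha
    set b : ℝ := e2 (x - (toMat D').mulVec α) with hb
    have ha0 : 0 ≤ a := e2_nonneg _
    have hb0 : 0 ≤ b := e2_nonneg _
    set t : ℝ := e2 ((toMat D').mulVec α - (toMat D).mulVec α) with ht
    have ht0 : 0 ≤ t := e2_nonneg _
    have htri : a ≤ b + t := by
      have := e2_sub_le x ((toMat D).mulVec α) ((toMat D').mulVec α)
      rw [← ha, ← hb, ← ht] at this
      exact this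
    -- t ≤ ‖D - D'‖ * A
    have hdiff : (toMat D').mulVec α - (toMat D).mulVec α = (toMat (D' - D)).mulVec α := by
      have : toMat (D' - D) = toMat D' - toMat D := rfl
      rw [this, Matrix.sub_mulVec]
    have htle : t ≤ dist D D' * A := by
      rw [ht, hdiff]
      calc e2 ((toMat (D' - D)).mulVec α) ≤ ‖D' - D‖ * l1 α := mulVec_e2_le _ _
        _ ≤ ‖D' - D‖ * A := mul_le_mul_of_nonneg_left hl1 (norm_nonneg _)
        _ = dist D D' * A := by rw [dist_eq_norm, ← norm_neg (D - D'), neg_sub]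
    -- a, b ≤ M
    have hxRx : e2 x ≤ Rx := hx
    have haM : a ≤ M := by
      have h1 := e2_sub_le x ((toMat D).mulVec α) 0
      have h2 : e2 ((0 : Fin m → ℝ) - (toMat D).mulVec α) ≤ RD * A := by
        have h3 : (0 : Fin m → ℝ) - (toMat D).mulVec α = (toMat (-D)).mulVec α := by
          have : toMat (-D) = -(toMat D) := rfl
          rw [this, Matrix.neg_mulVec, zero_sub]
        rw [h3]
        calc e2 ((toMat (-D)).mulVec α) ≤ ‖-D‖ * l1 α := mulVec_e2_le _ _
          _ ≤ RD * A := by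
              rw [norm_neg]
              exact mul_le_mul hD hl1 (l1_nonneg _) hRD
      have h4 : e2 (x - 0) = e2 x := by rw [sub_zero]
      rw [h4] at h1
      rw [ha, hM]
      linarith
    have hbM : b ≤ M := by
      have h1 := e2_sub_le x ((toMat D').mulVec α) 0
      have h2 : e2 ((0 : Fin m → ℝ) - (toMat D').mulVec α) ≤ RD * A := by
        have h3 : (0 : Fin m → ℝ) - (toMat D').mulVec α = (toMat (-D')).mulVec α := by
          have : toMat (-D') = -(toMat D') := rfl
          rw [this, Matrix.neg_mulVec, zero_sub]
        rw [h3]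
        calc e2 ((toMat (-D')).mulVec α) ≤ ‖-D'‖ * l1 α := mulVec_e2_le _ _
          _ ≤ RD * A := by
              rw [norm_neg]
              exact mul_le_mul hD' hl1 (l1_nonneg _) hRD
      have h4 : e2 (x - 0) = e2 x := by rw [sub_zero]
      rw [h4] at h1
      rw [hb, hM]
      linarith
    -- main chain
    have hinf : ellLoss lam x (toMat D) ≤ ((1 : ℝ) / 2) * a ^ 2 + lam * l1 α :=
      ciInf_le (ell_bdd lam hlam.le x (toMat D)) α
    have hd0 : 0 ≤ dist D D' := dist_nonneg
    have hkey : ((1 : ℝ) / 2) * a ^ 2 ≤ ((1 : ℝ) / 2) * b ^ 2 + C * dist D D' := by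
      have h5 : a ^ 2 - b ^ 2 ≤ (a + b) * t := by nlinarith
      have h6 : (a + b) * t ≤ 2 * M * (dist D D' * A) := by
        apply mul_le_mul (by linarith) htle ht0 (by positivity)
      rw [hC]
      nlinarith
    have hcoe : ((Real.toNNReal C : NNReal) : ℝ) = C := Real.coe_toNNReal C hC0
    linarith [hα]
  -- conclude
  rw [lipschitzOnWith_iff_dist_le_mul]
  intro D hD D' hD'
  rw [Real.dist_eq, abs_sub_le_iff]
  have hcoe : ((Real.toNNReal C : NNReal) : ℝ) = C := Real.coe_toNNReal C hC0
  constructor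
  · have := key D hD D' hD'
    rw [hcoe]
    linarith
  · have := key D' hD' D hD
    rw [hcoe, dist_comm D D']
    linarith
end

section
/- Let (Δ_t)_{t≥1} be a sequence of nonnegative reals satisfying Δ_t ≤ Δ_{t−1} − V Δ_{t−1}^{(m+2)/2} + C/t for constants V, C > 0 and integer m ≥ 1, with Δ_t uniformly bounded. Then Δ_t = O(t^{−2/(m+2)}), i.e., there exists a constant K such that Δ_t ≤ K t^{−2/(m+2)} for all t ≥ 1. -/
set_option maxHeartbeats 800000


/-- A nonnegative bounded sequence satisfying the recurrence
`Δ_t ≤ Δ_{t−1} − V Δ_{t−1}^{(m+2)/2} + C/t` decreases at rate `O(t^{−2/(m+2)})`. -/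
theorem stmt8 (m : ℕ) (hm : 1 ≤ m) (Δ : ℕ → ℝ) (V C M : ℝ)
    (hV : 0 < V) (hC : 0 < C)
    (hnn : ∀ t, 0 ≤ Δ t) (hbd : ∀ t, Δ t ≤ M)
    (hrec : ∀ t : ℕ, 1 ≤ t →
      Δ t ≤ Δ (t - 1) - V * Δ (t - 1) ^ (((m : ℝ) + 2) / 2) + C / t) :
    ∃ K : ℝ, ∀ t : ℕ, 1 ≤ t → Δ t ≤ K * (t : ℝ) ^ (-(2 : ℝ) / ((m : ℝ) + 2)) := by
  have hm1 : (1 : ℝ) ≤ (m : ℝ) := by exact_mod_cast hm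
  set p : ℝ := ((m : ℝ) + 2) / 2 with hpdef
  set α : ℝ := 2 / ((m : ℝ) + 2) with hαdef
  have hm2 : (0 : ℝ) < (m : ℝ) + 2 := by linarith
  have hα0 : 0 < α := by positivity
  have hα1 : α ≤ 1 := by
    rw [hαdef, div_le_one hm2]; linarith
  have hp32 : (3 : ℝ) / 2 ≤ p := by
    rw [hpdef]; linarith
  have hp0 : 0 < p := by linarith
  have hαp : α * p = 1 := by
    rw [hαdef, hpdef]; field_simp
  set K : ℝ := max (max M (2 * C)) (max 2 (2 * ((2 + C) / V) ^ 2)) with hKdef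
  have hKM : M ≤ K := le_trans (le_max_left _ _) (le_max_left _ _)
  have hKC : 2 * C ≤ K := le_trans (le_max_right _ _) (le_max_left _ _)
  have hK2 : (2 : ℝ) ≤ K := le_trans (le_max_left _ _) (le_max_right _ _)
  have hKsq : 2 * ((2 + C) / V) ^ 2 ≤ K := le_trans (le_max_right _ _) (le_max_right _ _)
  have hK0 : 0 < K := by linarith
  -- key constant inequality : K + C ≤ V * (K/2)^p
  have hVK : K + C ≤ V * (K / 2) ^ p := by
    have h1 : (1 : ℝ) ≤ K / 2 := by linarith
    have hsqrt : (2 + C) / V ≤ Real.sqrt (K / 2) := by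
      have h2 : ((2 + C) / V) ^ 2 ≤ K / 2 := by nlinarith
      calc (2 + C) / V = Real.sqrt (((2 + C) / V) ^ 2) :=
            (Real.sqrt_sq (by positivity)).symm
        _ ≤ Real.sqrt (K / 2) := Real.sqrt_le_sqrt h2
    have h32 : (K / 2) ^ ((3 : ℝ) / 2) ≤ (K / 2) ^ p :=
      Real.rpow_le_rpow_of_exponent_le h1 hp32
    have heq : (K / 2) ^ ((3 : ℝ) / 2) = (K / 2) * Real.sqrt (K / 2) := by
      rw [show (3 : ℝ) / 2 = 1 + 1 / 2 by norm_num,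
        Real.rpow_add (by linarith : (0 : ℝ) < K / 2), Real.rpow_one,
        ← Real.sqrt_eq_rpow]
    have hsq0 : 0 ≤ Real.sqrt (K / 2) := Real.sqrt_nonneg _
    have hVs : 2 + C ≤ V * Real.sqrt (K / 2) := by
      rw [div_le_iff₀ hV] at hsqrt; linarith
    have h4 : V * (K / 2 * Real.sqrt (K / 2)) ≤ V * (K / 2) ^ p := by
      rw [← heq]; exact mul_le_mul_of_nonneg_left h32 hV.le
    have h5 : (K / 2) * (2 + C) ≤ K / 2 * (V * Real.sqrt (K / 2)) :=
      mul_le_mul_of_nonneg_left hVs (by linarith)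
    nlinarith [hC, hK2]
  clear_value K p α
  refine ⟨K, ?_⟩
  have main : ∀ t : ℕ, 1 ≤ t → Δ t ≤ K * (t : ℝ) ^ (-α) := by
    intro t ht
    induction t, ht using Nat.le_induction with
    | base =>
      simp only [Nat.cast_one, Real.one_rpow, mul_one]
      exact le_trans (hbd 1) hKM
    | succ t ht ih =>
      set T : ℝ := (t : ℝ) with hTdef
      have hT1 : (1 : ℝ) ≤ T := by rw [hTdef]; exact_mod_cast ht
      have hcast : ((t + 1 : ℕ) : ℝ) = T + 1 := by rw [hTdef]; push_cast; ring
      clear_value T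
      have hT0 : (0 : ℝ) < T := by linarith
      have hTp : (0 : ℝ) < T + 1 := by linarith
      have hTp1 : (1 : ℝ) ≤ T + 1 := by linarith
      have hrec' : Δ (t + 1) ≤ Δ t - V * Δ t ^ p + C / (T + 1) := by
        have := hrec (t + 1) (by omega)
        simpa [Nat.add_sub_cancel, ← hTdef] using this
      rw [hcast]
      have hinv : (0 : ℝ) < (T + 1)⁻¹ := by positivity
      have hmono : (T + 1)⁻¹ ≤ (T + 1) ^ (-α) := by
        have : (T + 1) ^ (-1 : ℝ) ≤ (T + 1) ^ (-α) :=
          Real.rpow_le_rpow_of_exponent_le hTp1 (by linarith)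
        rwa [Real.rpow_neg_one] at this
      have hpow_nonneg : (0 : ℝ) ≤ (T + 1) ^ (-α) := Real.rpow_nonneg (by linarith) _
      by_cases hcase : Δ t ≤ K / 2 * (T + 1) ^ (-α)
      · -- small case: drop the drift term
        have h1 : 0 ≤ V * Δ t ^ p := mul_nonneg hV.le (Real.rpow_nonneg (hnn t) p)
        have h2 : C / (T + 1) ≤ K / 2 * (T + 1) ^ (-α) := by
          rw [div_eq_mul_inv]
          exact mul_le_mul (by linarith) hmono hinv.le (by linarith)
        linarith
      · push_neg at hcase
        -- large case: drift term dominates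
        have hx0 : (0 : ℝ) ≤ K / 2 * (T + 1) ^ (-α) := by positivity
        have hdrift : (K / 2) ^ p * (T + 1)⁻¹ ≤ Δ t ^ p := by
          have h1 : (K / 2 * (T + 1) ^ (-α)) ^ p ≤ Δ t ^ p :=
            Real.rpow_le_rpow hx0 hcase.le hp0.le
          have h2 : (K / 2 * (T + 1) ^ (-α)) ^ p
              = (K / 2) ^ p * (T + 1)⁻¹ := by
            rw [Real.mul_rpow (by linarith) hpow_nonneg,
              ← Real.rpow_mul (by linarith : (0 : ℝ) ≤ T + 1),
              show -α * p = -1 by rw [neg_mul, hαp], Real.rpow_neg_one]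
          rwa [h2] at h1
        -- difference of powers bound
        have hD : T ^ (-α) - (T + 1) ^ (-α) ≤ (T + 1)⁻¹ := by
          have hs : T ^ (1 - α) ≤ (T + 1) ^ (1 - α) :=
            Real.rpow_le_rpow hT0.le (by linarith) (by linarith)
          have e1 : T ^ (1 - α) = T * T ^ (-α) := by
            rw [sub_eq_add_neg, Real.rpow_add hT0, Real.rpow_one]
          have e2 : (T + 1) ^ (1 - α) = (T + 1) * (T + 1) ^ (-α) := by
            rw [sub_eq_add_neg, Real.rpow_add hTp, Real.rpow_one]
          have hle1 : T ^ (-α) ≤ 1 := by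
            have := Real.rpow_le_rpow_of_exponent_le hT1 (by linarith : -α ≤ 0)
            rwa [Real.rpow_zero] at this
          rw [e1, e2] at hs
          have h3 : (T ^ (-α) - (T + 1) ^ (-α)) * (T + 1) ≤ 1 := by nlinarith [hs, hle1]
          have h5 := (le_div_iff₀ hTp).2 h3
          rwa [one_div] at h5
        -- combine
        have hKD : K * T ^ (-α) ≤ K * (T + 1) ^ (-α) + K * (T + 1)⁻¹ := by
          have h := mul_le_mul_of_nonneg_left hD hK0.le
          rw [mul_sub] at h; linarith
        have hVd : K * (T + 1)⁻¹ + C * (T + 1)⁻¹ ≤ V * Δ t ^ p := by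
          have h := mul_le_mul_of_nonneg_right hVK hinv.le
          have h2 := mul_le_mul_of_nonneg_left hdrift hV.le
          calc K * (T + 1)⁻¹ + C * (T + 1)⁻¹ = (K + C) * (T + 1)⁻¹ := by ring
            _ ≤ V * (K / 2) ^ p * (T + 1)⁻¹ := h
            _ = V * ((K / 2) ^ p * (T + 1)⁻¹) := by ring
            _ ≤ V * Δ t ^ p := h2
        have hCT : C / (T + 1) = C * (T + 1)⁻¹ := div_eq_mul_inv _ _
        rw [hCT] at hrec'
        linarith [hrec', ih, hKD, hVd]
  intro t ht
  have : -(2 : ℝ) / ((m : ℝ) + 2) = -α := by rw [hαdef, neg_div]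
  rw [this]
  exact main t ht
end

section
/- Suppose (a_t)_{t≥1} is a sequence of nonnegative reals such that Σ_{t≥1} a_t/(t+1) < ∞ and |a_{t+1} − a_t| ≤ C/t for some constant C > 0. Then a_t → 0 as t → ∞. -/
/-- If `Σ a_t/(t+1) < ∞` for a nonnegative sequence with `|a_{t+1} − a_t| ≤ C/t`,
then `a_t → 0`. -/
theorem stmt9 (a : ℕ → ℝ) (C : ℝ) (hC : 0 < C)
    (hnn : ∀ t, 0 ≤ a t)
    (hsum : Summable fun t : ℕ => a t / (t + 1))
    (hinc : ∀ t : ℕ, 1 ≤ t → |a (t + 1) - a t| ≤ C / t) :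
    Filter.Tendsto a Filter.atTop (nhds 0) := by
  by_contra hcon
  rw [Metric.tendsto_atTop] at hcon
  push_neg at hcon
  obtain ⟨ε, hε, hfreq⟩ := hcon
  set K := ε / (2 * C) with hK
  have hK0 : 0 < K := by positivity
  set δ := ε / 2 * (K / (K + 2)) with hδ
  have hδ0 : 0 < δ := by positivity
  obtain ⟨s, hs⟩ := (summable_iff_vanishing.mp hsum) (Metric.ball 0 δ)
    (Metric.ball_mem_nhds 0 hδ0)
  set N : ℕ := max (s.sup id + 1) 1 with hN
  obtain ⟨t, htN, ht⟩ := hfreq N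
  have ht1 : 1 ≤ t := le_trans (le_max_right _ 1) htN
  have htR : (1:ℝ) ≤ (t:ℝ) := by exact_mod_cast ht1
  have htpos : (0:ℝ) < (t:ℝ) := by linarith
  have hat : ε ≤ a t := by
    rw [Real.dist_eq, sub_zero, abs_of_nonneg (hnn t)] at ht
    linarith
  set m : ℕ := ⌊K * t⌋₊ with hm
  have hmle : (m:ℝ) ≤ K * t := Nat.floor_le (by positivity)
  have hmlt : K * t < (m:ℝ) + 1 := Nat.lt_floor_add_one _
  -- Claim A: for k ≤ m, a (t+k) ≥ ε - C * k / t
  have claimA : ∀ k, k ≤ m → ε - C * k / t ≤ a (t + k) := by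
    intro k hk
    induction k with
    | zero => simpa using hat
    | succ k ih =>
      have hk' : k ≤ m := Nat.le_of_succ_le hk
      have ihk := ih hk'
      have h1 : 1 ≤ t + k := le_trans ht1 (Nat.le_add_right t k)
      have hinc' := (abs_le.mp (hinc (t + k) h1)).1
      have hcast : ((t + k : ℕ) : ℝ) = (t:ℝ) + k := by push_cast; ring
      rw [hcast] at hinc'
      have hdiv : C / ((t:ℝ) + k) ≤ C / t := by
        apply div_le_div_of_nonneg_left (le_of_lt hC) htpos
        linarith [Nat.cast_nonneg (α := ℝ) k]
      have hgoal : ε - C * ((k:ℝ) + 1) / t ≤ a (t + (k + 1)) := by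
        have hexpand : C * ((k:ℝ) + 1) / t = C * k / t + C / t := by ring
        rw [hexpand, show t + (k + 1) = t + k + 1 from rfl]
        linarith
      have : ((k + 1 : ℕ) : ℝ) = (k:ℝ) + 1 := by push_cast; ring
      rw [this]
      exact hgoal
  -- Claim B: for k ≤ m, a (t+k) ≥ ε/2
  have claimB : ∀ k, k ≤ m → ε / 2 ≤ a (t + k) := by
    intro k hk
    have h1 := claimA k hk
    have hkm : (k:ℝ) ≤ (m:ℝ) := by exact_mod_cast hk
    have h2 : C * k / t ≤ C * K := by
      rw [div_le_iff₀ htpos]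
      have : (k:ℝ) ≤ K * t := le_trans hkm hmle
      nlinarith
    have hCK : C * K = ε / 2 := by
      rw [hK]; field_simp
    linarith
  -- The window
  set F : Finset ℕ := Finset.Ico t (t + m + 1) with hF
  have hdisj : Disjoint F s := by
    rw [Finset.disjoint_left]
    intro x hx hxs
    have hxt : t ≤ x := (Finset.mem_Ico.mp hx).1
    have hx1 : x ≤ s.sup id := Finset.le_sup (f := id) hxs
    have : s.sup id + 1 ≤ N := le_max_left _ _
    omega
  have hball := hs F hdisj
  rw [Metric.mem_ball, Real.dist_eq, sub_zero] at hball
  have habs : |∑ b ∈ F, a b / (b + 1)| < δ := hball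
  -- lower bound on the sum
  have hcard : F.card = m + 1 := by
    rw [hF, Nat.card_Ico]; omega
  have hlower : δ ≤ ∑ b ∈ F, a b / (b + 1) := by
    have hterm : ∀ b ∈ F, (ε / 2) / ((t:ℝ) + m + 1) ≤ a b / (b + 1) := by
      intro b hb
      obtain ⟨hb1, hb2⟩ := Finset.mem_Ico.mp hb
      obtain ⟨k, rfl⟩ := Nat.exists_eq_add_of_le hb1
      have hkm : k ≤ m := by omega
      have hB := claimB k hkm
      have hb2' : ((t:ℝ) + k + 1) ≤ (t:ℝ) + m + 1 := by
        have : (k:ℝ) ≤ (m:ℝ) := by exact_mod_cast hkm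
        linarith
      have hpos1 : (0:ℝ) < (t:ℝ) + k + 1 := by positivity
      have hpos2 : (0:ℝ) < (t:ℝ) + m + 1 := by positivity
      have hcast : ((t + k : ℕ) : ℝ) = (t:ℝ) + k := by push_cast; ring
      rw [hcast]
      calc (ε / 2) / ((t:ℝ) + m + 1) ≤ (ε / 2) / ((t:ℝ) + k + 1) := by
            gcongr <;> linarith
        _ ≤ a (t + k) / ((t:ℝ) + k + 1) := by gcongr
    have hsum_lb : (F.card : ℝ) * ((ε / 2) / ((t:ℝ) + m + 1)) ≤ ∑ b ∈ F, a b / (b + 1) := by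
      calc (F.card : ℝ) * ((ε / 2) / ((t:ℝ) + m + 1))
          = ∑ _b ∈ F, (ε / 2) / ((t:ℝ) + m + 1) := by
            rw [Finset.sum_const, nsmul_eq_mul]
        _ ≤ ∑ b ∈ F, a b / (b + 1) := Finset.sum_le_sum hterm
    rw [hcard] at hsum_lb
    -- (m+1) * (ε/2)/(t+m+1) ≥ δ
    have hinner : K / (K + 2) ≤ ((m:ℝ) + 1) / ((t:ℝ) + m + 1) := by
      rw [div_le_div_iff₀ (by positivity) (by positivity)]
      nlinarith [hmlt]
    have hstep : δ ≤ ((m:ℝ) + 1) * ((ε / 2) / ((t:ℝ) + m + 1)) := by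
      calc δ = ε / 2 * (K / (K + 2)) := hδ
        _ ≤ ε / 2 * (((m:ℝ) + 1) / ((t:ℝ) + m + 1)) :=
            mul_le_mul_of_nonneg_left hinner (le_of_lt (half_pos hε))
        _ = ((m:ℝ) + 1) * ((ε / 2) / ((t:ℝ) + m + 1)) := by ring
    have : ((m:ℝ) + 1) = ((m + 1 : ℕ) : ℝ) := by push_cast; ring
    calc δ ≤ ((m:ℝ) + 1) * ((ε / 2) / ((t:ℝ) + m + 1)) := hstep
      _ = ((m + 1 : ℕ) : ℝ) * ((ε / 2) / ((t:ℝ) + m + 1)) := by rw [this]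
      _ ≤ _ := hsum_lb
  have := lt_of_le_of_lt (le_trans hlower (le_abs_self _)) habs
  exact lt_irrefl _ this
end
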